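/- Let γ be the standard Gaussian measure on ℝ with CDF Φ, Φ⁻¹ : (0,1) → ℝ its inverse, d ≥ 1, and μ the d-fold product of standard Gaussian measures on ℝ^d. Let f : ℝ × ℝ^d → ℝ and Γ : ℝ^d → ℝ be measurable. Define g(z,y) = max(f(z,y),0)·1{z < Γ(y)} on ℝ × ℝ^d and ĝ(u,y) = Φ(Γ(y))·max( f( Φ⁻¹( u·Φ(Γ(y)) ), y ), 0 ) on (0,1) × ℝ^d. If g is integrable with respect to γ ⊗ μ, then ĝ is integrable with respect to λ ⊗ μ (λ = Lebesgue measure on (0,1)) and ∫_{(0,1)×ℝ^d} ĝ d(λ ⊗ μ) = ∫_{ℝ×ℝ^d} g d(γ ⊗ μ). (Unbiasedness of the conditional sampling estimator.) -/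

import Mathlib

open MeasureTheory ProbabilityTheory ENNReal

/-- Unbiasedness of the conditional sampling estimator: if the up-&-out payoff
`g(z,y) = max(f(z,y),0)·1{z < Γ(y)}` is integrable w.r.t. the product of a standard
Gaussian on `ℝ` and the `d`-fold product of standard Gaussians on `ℝ^d`, then the
conditionally sampled payoff `ĝ(u,y) = Φ(Γ(y))·max(f(Φ⁻¹(u·Φ(Γ(y))), y), 0)` is
integrable w.r.t. Lebesgue measure on `(0,1)` times the Gaussian product, with the same
integral. -/
theorem conditional_sampling_unbiased
    (d : ℕ) (hd : 1 ≤ d)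
    (Φ : ℝ → ℝ)
    (hΦ : ∀ x : ℝ, Φ x = ((gaussianReal 0 1) (Set.Iic x)).toReal)
    (Φinv : ℝ → ℝ)
    (hΦinv : ∀ p ∈ Set.Ioo (0 : ℝ) 1, Φ (Φinv p) = p)
    (f : ℝ × (Fin d → ℝ) → ℝ) (hf : Measurable f)
    (Γ : (Fin d → ℝ) → ℝ) (hΓ : Measurable Γ)
    (μ : Measure (Fin d → ℝ))
    (hμ : μ = Measure.pi fun _ : Fin d => gaussianReal 0 1)
    (g ghat : ℝ × (Fin d → ℝ) → ℝ)
    (hg : ∀ p : ℝ × (Fin d → ℝ), g p = if p.1 < Γ p.2 then max (f p) 0 else 0)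
    (hghat : ∀ p : ℝ × (Fin d → ℝ),
      ghat p = Φ (Γ p.2) * max (f (Φinv (p.1 * Φ (Γ p.2)), p.2)) 0)
    (hint : Integrable g ((gaussianReal 0 1).prod μ)) :
    Integrable ghat ((volume.restrict (Set.Ioo (0 : ℝ) 1)).prod μ) ∧
    ∫ p, ghat p ∂((volume.restrict (Set.Ioo (0 : ℝ) 1)).prod μ)
      = ∫ p, g p ∂((gaussianReal 0 1).prod μ) := by
  subst hμ
  set γ : Measure ℝ := gaussianReal 0 1 with hγ
  set μ : Measure (Fin d → ℝ) := Measure.pi fun _ : Fin d => gaussianReal 0 1 with hμ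
  set ρ : Measure ℝ := volume.restrict (Set.Ioo (0 : ℝ) 1) with hρ
  -- basic facts about Φ
  have hΦmono : Monotone Φ := by
    intro a b hab
    rw [hΦ, hΦ]
    exact ENNReal.toReal_mono (measure_ne_top _ _)
      (measure_mono (Set.Iic_subset_Iic.mpr hab))
  have hΦmeas : Measurable Φ := hΦmono.measurable
  have hIoc_pos : ∀ a b : ℝ, a < b → γ (Set.Ioc a b) ≠ 0 := by
    intro a b hab h0
    have hv : (volume : Measure ℝ) (Set.Ioc a b) = 0 :=
      (gaussianReal_absolutelyContinuous' 0 one_ne_zero) h0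
    rw [Real.volume_Ioc] at hv
    simp only [ENNReal.ofReal_eq_zero] at hv
    linarith
  have hΦsm : StrictMono Φ := by
    intro a b hab
    rw [hΦ, hΦ]
    have hsplit : γ (Set.Iic b) = γ (Set.Iic a) + γ (Set.Ioc a b) := by
      rw [← Set.Iic_union_Ioc_eq_Iic hab.le]
      exact measure_union (Set.Iic_disjoint_Ioc le_rfl) measurableSet_Ioc
    have hlt : γ (Set.Iic a) < γ (Set.Iic b) := by
      rw [hsplit]
      exact ENNReal.lt_add_right (measure_ne_top _ _) (hIoc_pos a b hab)
    exact (ENNReal.toReal_lt_toReal (measure_ne_top _ _) (measure_ne_top _ _)).mpr hlt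
  have hΦ01 : ∀ x : ℝ, Φ x ∈ Set.Ioo (0 : ℝ) 1 := by
    intro x
    constructor
    · rw [hΦ]
      refine ENNReal.toReal_pos ?_ (measure_ne_top _ _)
      intro h0
      exact hIoc_pos (x - 1) x (by linarith)
        (le_antisymm (h0 ▸ measure_mono Set.Ioc_subset_Iic_self) bot_le)
    · have h1 : Φ x < Φ (x + 1) := hΦsm (by linarith)
      have h2 : Φ (x + 1) ≤ 1 := by
        rw [hΦ]
        refine ENNReal.toReal_le_of_le_ofReal zero_le_one ?_
        rw [ENNReal.ofReal_one]
        exact (measure_mono (Set.subset_univ _)).trans_eq measure_univ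
      linarith
  have hΦinjΦ : ∀ z : ℝ, Φinv (Φ z) = z := by
    intro z
    exact hΦsm.injective (hΦinv _ (hΦ01 z))
  have hγIic : ∀ x : ℝ, γ (Set.Iic x) = ENNReal.ofReal (Φ x) := by
    intro x
    rw [hΦ, ENNReal.ofReal_toReal (measure_ne_top _ _)]
  -- the probability integral transform: Φ pushes γ to uniform on (0,1)
  have hmap : Measure.map Φ γ = ρ := by
    have : IsFiniteMeasure (Measure.map Φ γ) :=
      Measure.isFiniteMeasure_map γ Φ
    refine Measure.ext_of_Iic _ _ (fun t => ?_)
    rw [Measure.map_apply hΦmeas measurableSet_Iic, hρ,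
      Measure.restrict_apply measurableSet_Iic]
    rcases le_or_gt t 0 with ht | ht
    · have h1 : Φ ⁻¹' Set.Iic t = ∅ := by
        ext z
        simp only [Set.mem_preimage, Set.mem_Iic, Set.mem_empty_iff_false, iff_false, not_le]
        exact lt_of_le_of_lt ht (hΦ01 z).1
      have h2 : Set.Iic t ∩ Set.Ioo (0 : ℝ) 1 = ∅ := by
        ext x
        simp only [Set.mem_inter_iff, Set.mem_Iic, Set.mem_Ioo, Set.mem_empty_iff_false,
          iff_false, not_and]
        intro hx hx0
        linarith
      rw [h1, h2]
      simp
    · rcases lt_or_ge t 1 with ht1 | ht1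
      · have htmem : t ∈ Set.Ioo (0 : ℝ) 1 := ⟨ht, ht1⟩
        have h1 : Φ ⁻¹' Set.Iic t = Set.Iic (Φinv t) := by
          ext z
          simp only [Set.mem_preimage, Set.mem_Iic]
          rw [← hΦsm.le_iff_le (a := z) (b := Φinv t), hΦinv t htmem]
        have h2 : Set.Iic t ∩ Set.Ioo (0 : ℝ) 1 = Set.Ioc 0 t := by
          ext x
          simp only [Set.mem_inter_iff, Set.mem_Iic, Set.mem_Ioo, Set.mem_Ioc]
          constructor
          · rintro ⟨hx, hx0, _⟩; exact ⟨hx0, hx⟩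
          · rintro ⟨hx0, hx⟩; exact ⟨hx, hx0, lt_of_le_of_lt hx ht1⟩
        rw [h1, h2, hγIic, hΦinv t htmem, Real.volume_Ioc, sub_zero]
      · have h1 : Φ ⁻¹' Set.Iic t = Set.univ := by
          ext z
          simp only [Set.mem_preimage, Set.mem_Iic, Set.mem_univ, iff_true]
          exact le_trans (hΦ01 z).2.le ht1
        have h2 : Set.Iic t ∩ Set.Ioo (0 : ℝ) 1 = Set.Ioo 0 1 := by
          apply Set.inter_eq_self_of_subset_right
          intro x hx
          exact le_trans hx.2.le ht1
        rw [h1, h2, measure_univ, Real.volume_Ioo]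
        norm_num
  -- measurable modification of Φinv
  set Φinv' : ℝ → ℝ := fun p => if p ∈ Set.Ioo (0 : ℝ) 1 then Φinv p else 0 with hΦinv'def
  have hΦinv'_eq : ∀ p ∈ Set.Ioo (0 : ℝ) 1, Φinv' p = Φinv p := by
    intro p hp
    show (if p ∈ Set.Ioo (0 : ℝ) 1 then Φinv p else 0) = Φinv p
    rw [if_pos hp]
  have hΦinv'_meas : Measurable Φinv' := by
    apply measurable_of_Iic
    intro t
    have hset : Φinv' ⁻¹' Set.Iic t =
        (Set.Ioo (0 : ℝ) 1 ∩ Set.Iic (Φ t)) ∪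
          ((Set.Ioo (0 : ℝ) 1)ᶜ ∩ (if (0 : ℝ) ≤ t then Set.univ else ∅)) := by
      ext p
      by_cases hp : p ∈ Set.Ioo (0 : ℝ) 1
      · have h1 : Φinv' p = Φinv p := hΦinv'_eq p hp
        simp only [Set.mem_preimage, Set.mem_Iic, h1, Set.mem_union, Set.mem_inter_iff,
          Set.mem_compl_iff, hp, not_true_eq_false, false_and, or_false, true_and]
        rw [← hΦsm.le_iff_le (a := Φinv p) (b := t), hΦinv p hp]
      · have h1 : Φinv' p = 0 := by
          show (if p ∈ Set.Ioo (0 : ℝ) 1 then Φinv p else 0) = 0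
          rw [if_neg hp]
        simp only [Set.mem_preimage, Set.mem_Iic, h1, Set.mem_union, Set.mem_inter_iff,
          Set.mem_compl_iff, hp, not_false_eq_true, true_and, false_and, false_or]
        split_ifs with h0 <;> simp [h0]
    rw [hset]
    apply MeasurableSet.union
    · exact (measurableSet_Ioo.inter measurableSet_Iic)
    · exact (measurableSet_Ioo.compl.inter (by split_ifs <;> simp))
  have hΦinv'Φ : ∀ z : ℝ, Φinv' (Φ z) = z := by
    intro z
    rw [hΦinv'_eq _ (hΦ01 z), hΦinjΦ z]
  -- the key single-variable identity, for each fixed y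
  have key : ∀ y : Fin d → ℝ,
      ∫⁻ u in Set.Ioo (0 : ℝ) 1, ENNReal.ofReal (ghat (u, y))
        = ∫⁻ z, ENNReal.ofReal (g (z, y)) ∂γ := by
    intro y
    set c : ℝ := Φ (Γ y) with hc
    have hcm : c ∈ Set.Ioo (0 : ℝ) 1 := hΦ01 (Γ y)
    set K : ℝ → ℝ≥0∞ := fun v => ENNReal.ofReal (max (f (Φinv' v, y)) 0) with hK
    have hKmeas : Measurable K :=
      ENNReal.measurable_ofReal.comp
        ((hf.comp (hΦinv'_meas.prodMk measurable_const)).max measurable_const)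
    set H : ℝ → ℝ≥0∞ := (Set.Ioo (0 : ℝ) c).indicator K with hH
    have hHmeas : Measurable H := hKmeas.indicator measurableSet_Ioo
    -- right-hand side
    have hRHS : ∫⁻ z, ENNReal.ofReal (g (z, y)) ∂γ
        = ∫⁻ v in Set.Ioo (0 : ℝ) c, K v := by
      have h1 : ∀ z : ℝ, ENNReal.ofReal (g (z, y)) = H (Φ z) := by
        intro z
        rw [hg]
        by_cases hz : z < Γ y
        · have hmem : Φ z ∈ Set.Ioo (0 : ℝ) c := ⟨(hΦ01 z).1, hΦsm hz⟩
          rw [if_pos hz, hH, Set.indicator_of_mem hmem, hK]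
          simp [hΦinv'Φ z]
        · have hmem : Φ z ∉ Set.Ioo (0 : ℝ) c := by
            intro hmem
            exact hz (hΦsm.lt_iff_lt.mp hmem.2)
          rw [if_neg hz, hH, Set.indicator_of_notMem hmem]
          simp
      calc ∫⁻ z, ENNReal.ofReal (g (z, y)) ∂γ = ∫⁻ z, H (Φ z) ∂γ := by
            exact lintegral_congr (fun z => h1 z)
        _ = ∫⁻ v, H v ∂(Measure.map Φ γ) := (lintegral_map hHmeas hΦmeas).symm
        _ = ∫⁻ v, H v ∂ρ := by rw [hmap]
        _ = ∫⁻ v in Set.Ioo (0 : ℝ) c, K v ∂ρ := by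
            rw [hH]; exact lintegral_indicator measurableSet_Ioo K
        _ = ∫⁻ v in Set.Ioo (0 : ℝ) c, K v := by
            rw [hρ, Measure.restrict_restrict measurableSet_Ioo,
              Set.inter_eq_self_of_subset_left (Set.Ioo_subset_Ioo_right hcm.2.le)]
    -- left-hand side
    have hpre : (fun u : ℝ => u * c) ⁻¹' Set.Ioo (0 : ℝ) c = Set.Ioo (0 : ℝ) 1 := by
      ext u
      simp only [Set.mem_preimage, Set.mem_Ioo]
      constructor
      · rintro ⟨h1, h2⟩
        constructor <;> nlinarith [hcm.1]
      · rintro ⟨h1, h2⟩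
        constructor <;> nlinarith [hcm.1]
    have hLHS : ∫⁻ u in Set.Ioo (0 : ℝ) 1, ENNReal.ofReal (ghat (u, y))
        = ∫⁻ v in Set.Ioo (0 : ℝ) c, K v := by
      have h1 : ∫⁻ u in Set.Ioo (0 : ℝ) 1, ENNReal.ofReal (ghat (u, y))
          = ∫⁻ u in Set.Ioo (0 : ℝ) 1, ENNReal.ofReal c * K (u * c) := by
        refine setLIntegral_congr_fun measurableSet_Ioo (fun u hu => ?_)
        have hmem : u * c ∈ Set.Ioo (0 : ℝ) 1 := by
          constructor
          · exact mul_pos hu.1 hcm.1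
          · nlinarith [hu.1, hu.2, hcm.1, hcm.2]
        simp only [hghat, hK, ← hc]
        rw [ENNReal.ofReal_mul hcm.1.le, hΦinv'_eq _ hmem]
      have h2 : ∫⁻ u in Set.Ioo (0 : ℝ) 1, K (u * c)
          = ENNReal.ofReal c⁻¹ * ∫⁻ v in Set.Ioo (0 : ℝ) c, K v := by
        have hT : Measurable fun u : ℝ => u * c := measurable_id.mul_const c
        calc ∫⁻ u in Set.Ioo (0 : ℝ) 1, K (u * c)
            = ∫⁻ u, ((Set.Ioo (0 : ℝ) 1).indicator fun u => K (u * c)) u :=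
              (lintegral_indicator measurableSet_Ioo _).symm
          _ = ∫⁻ u, ((Set.Ioo (0 : ℝ) c).indicator K) (u * c) := by
              refine lintegral_congr fun u => ?_
              rw [← hpre]
              exact Set.indicator_comp_right (fun u : ℝ => u * c) (s := Set.Ioo (0:ℝ) c)
                (g := K) (x := u)
          _ = ∫⁻ v, ((Set.Ioo (0 : ℝ) c).indicator K) v ∂(Measure.map (fun u : ℝ => u * c) volume) :=
              (lintegral_map (hKmeas.indicator measurableSet_Ioo) hT).symm
          _ = ENNReal.ofReal |c⁻¹| * ∫⁻ v, ((Set.Ioo (0 : ℝ) c).indicator K) v := by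
              rw [Real.map_volume_mul_right hcm.1.ne', lintegral_smul_measure, smul_eq_mul]
          _ = ENNReal.ofReal c⁻¹ * ∫⁻ v in Set.Ioo (0 : ℝ) c, K v := by
              rw [abs_of_pos (inv_pos.mpr hcm.1), lintegral_indicator measurableSet_Ioo K]
      have hKT : Measurable fun u : ℝ => K (u * c) :=
        hKmeas.comp (measurable_id.mul_const c)
      rw [h1, lintegral_const_mul _ hKT, h2,
        ← mul_assoc, ← ENNReal.ofReal_mul hcm.1.le, mul_inv_cancel₀ hcm.1.ne',
        ENNReal.ofReal_one, one_mul]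
    rw [hLHS, hRHS]
  -- global measurability
  have hgmeas : Measurable g := by
    have hgdef : g = fun p => if p.1 < Γ p.2 then max (f p) 0 else 0 := funext hg
    rw [hgdef]
    exact Measurable.ite (measurableSet_lt measurable_fst (hΓ.comp measurable_snd))
      (hf.max measurable_const) measurable_const
  set ghat' : ℝ × (Fin d → ℝ) → ℝ :=
    fun p => Φ (Γ p.2) * max (f (Φinv' (p.1 * Φ (Γ p.2)), p.2)) 0 with hghat'def
  have hghat'meas : Measurable ghat' := by
    refine Measurable.mul (hΦmeas.comp (hΓ.comp measurable_snd)) ?_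
    exact (hf.comp ((hΦinv'_meas.comp
      (measurable_fst.mul (hΦmeas.comp (hΓ.comp measurable_snd)))).prodMk
      measurable_snd)).max measurable_const
  have hfst_ae : ∀ᵐ p ∂(ρ.prod μ), p.1 ∈ Set.Ioo (0 : ℝ) 1 := by
    rw [Filter.eventually_iff, mem_ae_iff]
    have hset : {p : ℝ × (Fin d → ℝ) | p.1 ∈ Set.Ioo (0:ℝ) 1}ᶜ
        = (Set.Ioo (0:ℝ) 1)ᶜ ×ˢ Set.univ := by
      rw [Set.prod_univ]
      rfl
    rw [hset, Measure.prod_prod]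
    have hz : ρ ((Set.Ioo (0:ℝ) 1)ᶜ) = 0 := by
      rw [hρ, Measure.restrict_apply measurableSet_Ioo.compl]
      simp
    rw [hz, zero_mul]
  have hae : ghat =ᵐ[ρ.prod μ] ghat' := by
    filter_upwards [hfst_ae] with p hp
    have hcm := hΦ01 (Γ p.2)
    have hmem : p.1 * Φ (Γ p.2) ∈ Set.Ioo (0:ℝ) 1 :=
      ⟨mul_pos hp.1 hcm.1, by nlinarith [hp.1, hp.2, hcm.1, hcm.2]⟩
    rw [hghat]
    simp only [hghat'def]
    rw [hΦinv'_eq _ hmem]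
  have hghat_nonneg : ∀ p, 0 ≤ ghat p := fun p => by
    rw [hghat]
    exact mul_nonneg (by rw [hΦ]; exact ENNReal.toReal_nonneg) (le_max_right _ _)
  have hg_nonneg : ∀ p, 0 ≤ g p := fun p => by
    rw [hg]; split_ifs; exacts [le_max_right _ _, le_rfl]
  -- lintegral identity over products
  have hprod : ∫⁻ p, ENNReal.ofReal (ghat p) ∂(ρ.prod μ)
      = ∫⁻ p, ENNReal.ofReal (g p) ∂(γ.prod μ) := by
    have h1 : ∫⁻ p, ENNReal.ofReal (ghat p) ∂(ρ.prod μ)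
        = ∫⁻ p, ENNReal.ofReal (ghat' p) ∂(ρ.prod μ) :=
      lintegral_congr_ae (hae.mono fun p hp => by simp only [hp])
    have hm1 : AEMeasurable (fun p : ℝ × (Fin d → ℝ) => ENNReal.ofReal (ghat' p)) (ρ.prod μ) :=
      (ENNReal.measurable_ofReal.comp hghat'meas).aemeasurable
    have hm2 : AEMeasurable (fun p : ℝ × (Fin d → ℝ) => ENNReal.ofReal (g p)) (γ.prod μ) :=
      (ENNReal.measurable_ofReal.comp hgmeas).aemeasurable
    rw [h1, lintegral_prod_symm (fun p => ENNReal.ofReal (ghat' p)) hm1,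
      lintegral_prod_symm (fun p => ENNReal.ofReal (g p)) hm2]
    refine lintegral_congr fun y => ?_
    rw [← key y]
    rw [hρ]
    refine setLIntegral_congr_fun measurableSet_Ioo (fun u hu => ?_)
    have hcm := hΦ01 (Γ y)
    have hmem : u * Φ (Γ y) ∈ Set.Ioo (0:ℝ) 1 :=
      ⟨mul_pos hu.1 hcm.1, by nlinarith [hu.1, hu.2, hcm.1, hcm.2]⟩
    simp only [hghat'def]
    rw [hghat]
    simp only
    rw [hΦinv'_eq _ hmem]
  have hglint : ∫⁻ p, ENNReal.ofReal (g p) ∂(γ.prod μ) < ⊤ :=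
    (hasFiniteIntegral_iff_ofReal (ae_of_all _ hg_nonneg)).mp hint.2
  have hmeas_ghat : AEStronglyMeasurable ghat (ρ.prod μ) :=
    hghat'meas.aestronglyMeasurable.congr hae.symm
  have hint_ghat : Integrable ghat (ρ.prod μ) := by
    refine ⟨hmeas_ghat, ?_⟩
    rw [hasFiniteIntegral_iff_ofReal (ae_of_all _ hghat_nonneg), hprod]
    exact hglint
  refine ⟨hint_ghat, ?_⟩
  rw [integral_eq_lintegral_of_nonneg_ae (ae_of_all _ hghat_nonneg) hmeas_ghat,
    integral_eq_lintegral_of_nonneg_ae (ae_of_all _ hg_nonneg) hgmeas.aestronglyMeasurable,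
    hprod]
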